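/- For all y ∈ ℝ, the identity ρ'(y) · ∫₀^y ρ(z)² dz = (2/3)ρ(y)³ + ρ(y)² − 3ρ(y) holds. -/

import Mathlib

open Real

/-- The spike profile `ρ(y) = (3/2) sech²(y/2)`. -/
noncomputable def rho (y : ℝ) : ℝ := (3/2) * (1 / Real.cosh (y/2))^2

lemma half_hasDerivAt (y : ℝ) : HasDerivAt (fun x : ℝ => x/2) (1/2) y := by
  simpa using (hasDerivAt_id y).div_const 2

lemma cosh_half (y : ℝ) : HasDerivAt (fun x : ℝ => Real.cosh (x/2)) (Real.sinh (y/2) * (1/2)) y :=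
  by have := (Real.hasDerivAt_cosh (y/2)).comp y (half_hasDerivAt y); exact this

lemma sinh_half (y : ℝ) : HasDerivAt (fun x : ℝ => Real.sinh (x/2)) (Real.cosh (y/2) * (1/2)) y :=
  by have := (Real.hasDerivAt_sinh (y/2)).comp y (half_hasDerivAt y); exact this

lemma rho_hasDerivAt (y : ℝ) :
    HasDerivAt rho (-(3/2) * Real.sinh (y/2) / (Real.cosh (y/2))^3) y := by
  have hc := Real.cosh_pos (y/2)
  have hinv : HasDerivAt (fun x : ℝ => 1 / Real.cosh (x/2))
      (-(Real.sinh (y/2) * (1/2)) / (Real.cosh (y/2))^2) y := by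
    simpa [Pi.div_def] using (hasDerivAt_const y (1:ℝ)).div (cosh_half y) hc.ne'
  have h := (hinv.mul hinv).const_mul (3/2 : ℝ)
  have hfun : rho = fun x : ℝ => (3/2) * ((1 / Real.cosh (x/2)) * (1 / Real.cosh (x/2))) := by
    funext x; simp [rho, pow_two]
  rw [hfun]
  refine h.congr_deriv (Eq.symm ?_)
  field_simp
  ring

lemma T_hasDerivAt (y : ℝ) :
    HasDerivAt (fun x : ℝ => Real.sinh (x/2) / Real.cosh (x/2))
      ((1/2) / (Real.cosh (y/2))^2) y := by
  have hc := Real.cosh_pos (y/2)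
  have h := (sinh_half y).div (cosh_half y) hc.ne'
  refine h.congr_deriv (Eq.symm ?_)
  have hid := Real.cosh_sq_sub_sinh_sq (y/2)
  field_simp
  nlinarith [hid]

noncomputable def Ff (y : ℝ) : ℝ :=
  (9/2) * (Real.sinh (y/2) / Real.cosh (y/2)) - (3/2) * (Real.sinh (y/2) / Real.cosh (y/2))^3

lemma Ff_hasDerivAt (y : ℝ) : HasDerivAt Ff ((rho y)^2) y := by
  have hT := T_hasDerivAt y
  have h := ((hT.const_mul (9/2 : ℝ)).sub ((hT.pow 3).const_mul (3/2 : ℝ)))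
  refine h.congr_deriv (Eq.symm ?_)
  have hc := Real.cosh_pos (y/2)
  have hid := Real.cosh_sq_sub_sinh_sq (y/2)
  set s := Real.sinh (y/2) with hs
  set c := Real.cosh (y/2) with hcc
  have hs2 : s^2 = c^2 - 1 := by linarith
  simp only [rho]
  rw [div_pow, show (3:ℕ) - 1 = 2 from rfl, div_pow, hs2]
  field_simp
  ring

lemma rho_sq_cont : Continuous (fun z : ℝ => (rho z)^2) := by
  unfold rho
  fun_prop (disch := intro x; exact (Real.cosh_pos _).ne')

/-- The identity `ρ'(y) ∫₀^y ρ² = (2/3)ρ³ + ρ² − 3ρ` for all `y`. -/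
theorem stmt_15 :
    ∀ y : ℝ, deriv rho y * (∫ z in (0 : ℝ)..y, (rho z)^2)
      = (2/3) * (rho y)^3 + (rho y)^2 - 3 * rho y := by
  intro y
  have hint : (∫ z in (0 : ℝ)..y, (rho z)^2) = Ff y - Ff 0 := by
    exact intervalIntegral.integral_eq_sub_of_hasDerivAt
      (fun x _ => Ff_hasDerivAt x) (rho_sq_cont.intervalIntegrable 0 y)
  rw [(rho_hasDerivAt y).deriv, hint]
  have hc := Real.cosh_pos (y/2)
  have hid := Real.cosh_sq_sub_sinh_sq (y/2)
  simp only [Ff, rho]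
  norm_num [Real.sinh_zero, Real.cosh_zero]
  set s := Real.sinh (y/2) with hs
  set c := Real.cosh (y/2) with hcc
  have hs2 : s^2 = c^2 - 1 := by linarith
  have hs4 : s^4 = (c^2-1)^2 := by rw [show s^4 = (s^2)^2 by ring, hs2]
  field_simp
  ring_nf
  rw [hs2, hs4]; ring
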